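/- arXiv:2201.13135 — 6 statements merged into one kernel-verified Lean document; each statement's English description precedes it below -/
import Mathlib

section
/- Let D be an n×n Hermitian complex matrix. Then the matrix exponential of −D² is given by the Gaussian integral formula exp(−D²) = (4π)^(−1/2) ∫_ℝ e^(−k²/4) · exp(i·k·D) dk, where the integral is the Bochner integral of the matrix-valued function k ↦ e^(−k²/4)·exp(i k D). -/
open MeasureTheory

attribute [local instance] Matrix.normedAddCommGroup Matrix.normedSpace

/-- Gaussian integral formula for the exponential of minus the square of a
Hermitian matrix: `exp(−D²) = (4π)^(−1/2) ∫ℝ e^(−k²/4) · exp(i k D) dk`. -/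
theorem exp_neg_sq_eq_gaussian_integral {n : ℕ} (D : Matrix (Fin n) (Fin n) ℂ)
    (hD : D.IsHermitian) :
    NormedSpace.exp (-(D ^ 2)) =
      ((4 * Real.pi) ^ (-(1 / 2 : ℝ))) •
        ∫ k : ℝ, Real.exp (-k ^ 2 / 4) • NormedSpace.exp ((Complex.I * (k : ℂ)) • D) := by
  classical
  set U : Matrix (Fin n) (Fin n) ℂ := (hD.eigenvectorUnitary : Matrix (Fin n) (Fin n) ℂ) with hUdef
  have h1 : star U * U = 1 := Unitary.coe_star_mul_self hD.eigenvectorUnitary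
  have h2 : U * star U = 1 := Unitary.coe_mul_star_self hD.eigenvectorUnitary
  have hinv : U⁻¹ = star U := Matrix.inv_eq_left_inv h1
  have hunit : IsUnit U := ⟨⟨U, star U, h2, h1⟩, rfl⟩
  set lam : Fin n → ℝ := hD.eigenvalues with hlam
  have hspec : D = U * Matrix.diagonal (fun i => (lam i : ℂ)) * star U := by
    simpa [Function.comp_def] using hD.spectral_theorem
  set C : Fin n → Matrix (Fin n) (Fin n) ℂ :=
    fun i => U * Matrix.single i i (1 : ℂ) * star U with hC
  -- real scalars act like complex scalars
  have hre : ∀ (r : ℝ) (M : Matrix (Fin n) (Fin n) ℂ), r • M = (r : ℂ) • M := by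
    intro r M; ext i j; simp [Complex.real_smul]
  -- conjugated diagonal as a sum
  have hconj : ∀ v : Fin n → ℂ, U * Matrix.diagonal v * star U = ∑ i, v i • C i := by
    intro v
    have hdiag : Matrix.diagonal v = ∑ i, v i • Matrix.single i i (1 : ℂ) := by
      ext a b
      simp [Matrix.diagonal_apply, Matrix.single, Matrix.sum_apply, ite_and,
        Finset.sum_ite_eq, eq_comm]
    rw [hdiag, Finset.mul_sum, Finset.sum_mul]
    refine Finset.sum_congr rfl fun i _ => ?_
    rw [mul_smul_comm, smul_mul_assoc]
  -- exponential of a conjugated diagonal matrix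
  have hexpconj : ∀ v : Fin n → ℂ,
      NormedSpace.exp (U * Matrix.diagonal v * star U) = ∑ i, Complex.exp (v i) • C i := by
    intro v
    rw [← hinv, Matrix.exp_conj U _ hunit, hinv, Matrix.exp_diagonal, hconj]
    refine Finset.sum_congr rfl fun i _ => ?_
    simp [Pi.exp_def, Complex.exp_eq_exp_ℂ]
  -- product of conjugated matrices
  have hmul : ∀ A B : Matrix (Fin n) (Fin n) ℂ,
      (U * A * star U) * (U * B * star U) = U * (A * B) * star U := by
    intro A B
    simp only [mul_assoc]
    rw [← mul_assoc (star U) U, h1, one_mul]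
  -- the left-hand side
  have hL : NormedSpace.exp (-(D ^ 2)) = ∑ i, Complex.exp (-(lam i : ℂ) ^ 2) • C i := by
    have hsq : -(D ^ 2) = U * Matrix.diagonal (fun i => -((lam i : ℂ) ^ 2)) * star U := by
      rw [hspec, pow_two, hmul, Matrix.diagonal_mul_diagonal]
      have hneg : Matrix.diagonal (fun i => -((lam i : ℂ) ^ 2))
          = -(Matrix.diagonal fun i => (lam i : ℂ) * (lam i : ℂ)) := by
        ext a b
        by_cases h : a = b <;> simp [Matrix.diagonal_apply, h, pow_two]
      rw [hneg, mul_neg, neg_mul]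
    rw [hsq, hexpconj]
  -- the integrand
  set g : Fin n → ℝ → ℂ :=
    fun i k => Complex.exp (-(1/4 : ℂ) * (k : ℂ) ^ 2 + (Complex.I * (lam i : ℂ)) * (k : ℂ) + 0)
    with hg
  have hpt : ∀ k : ℝ, Real.exp (-k ^ 2 / 4) • NormedSpace.exp ((Complex.I * (k : ℂ)) • D)
      = ∑ i, g i k • C i := by
    intro k
    have hsm : (Complex.I * (k : ℂ)) • D
        = U * Matrix.diagonal (fun i => Complex.I * (k : ℂ) * (lam i : ℂ)) * star U := by
      have hfun : (fun i => Complex.I * (k : ℂ) * (lam i : ℂ))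
          = (Complex.I * (k : ℂ)) • (fun i => (lam i : ℂ)) := by
        funext i; simp
      rw [hspec, hfun, Matrix.diagonal_smul, mul_smul_comm, smul_mul_assoc]
    rw [hsm, hexpconj, Finset.smul_sum]
    refine Finset.sum_congr rfl fun i _ => ?_
    rw [hre, smul_smul]
    congr 1
    rw [Complex.ofReal_exp, ← Complex.exp_add]
    congr 1
    push_cast
    ring
  -- integrability of each scalar piece
  have hgint : ∀ i, Integrable (g i) := fun i =>
    integrable_cexp_quadratic (by norm_num) (Complex.I * (lam i : ℂ)) 0
  -- compute the integral
  have hint : (∫ k : ℝ, Real.exp (-k ^ 2 / 4) • NormedSpace.exp ((Complex.I * (k : ℂ)) • D))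
      = ∑ i, (∫ k : ℝ, g i k) • C i := by
    simp_rw [hpt]
    rw [integral_finset_sum _ (fun i _ => (hgint i).smul_const (C i))]
    exact Finset.sum_congr rfl fun i _ => integral_smul_const (g i) (C i)
  -- the scalar Gaussian integral
  have hI : ∀ i, (∫ k : ℝ, g i k)
      = ((4 * Real.pi) ^ ((1 : ℝ)/2) : ℝ) • Complex.exp (-(lam i : ℂ) ^ 2) := by
    intro i
    have h := fourierIntegral_gaussian (b := (1/4 : ℂ)) (by norm_num) ((lam i : ℂ))
    have heq : ∀ x : ℝ, g i x
        = Complex.exp (Complex.I * (lam i : ℂ) * (x : ℂ))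
          * Complex.exp (-(1/4 : ℂ) * (x : ℂ) ^ 2) := by
      intro x; rw [hg, ← Complex.exp_add]; ring_nf
    simp_rw [heq]
    rw [h]
    have h4 : ((Real.pi : ℂ) / (1/4)) = ((4 * Real.pi : ℝ) : ℂ) := by push_cast; ring
    have h5 : ((1 : ℂ)/2) = (((1 : ℝ)/2 : ℝ) : ℂ) := by norm_num
    rw [h4, h5, ← Complex.ofReal_cpow (by positivity)]
    have h6 : (-(lam i : ℂ) ^ 2 / (4 * (1/4))) = -(lam i : ℂ) ^ 2 := by norm_num
    rw [h6, Complex.real_smul]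
  -- put everything together
  have hab : ((4 * Real.pi) ^ (-(1 / 2 : ℝ)) : ℝ) * ((4 * Real.pi) ^ ((1 : ℝ)/2) : ℝ) = 1 := by
    rw [← Real.rpow_add (by positivity)]
    norm_num
  rw [hL, hint]
  simp_rw [hI]
  rw [Finset.smul_sum]
  refine Finset.sum_congr rfl fun i _ => ?_
  rw [hre, Complex.real_smul, smul_smul]
  congr 1
  rw [← mul_assoc, ← Complex.ofReal_mul, hab, Complex.ofReal_one, one_mul]
end

section
/- Let F be an n×n Hermitian complex matrix. Then exp(F²) = (4π)^(−1/2) ∫_ℝ e^(−k²/4) · exp(k·F) dk, where the integral is the Bochner integral of the matrix-valued function k ↦ e^(−k²/4)·exp(k F). -/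
open MeasureTheory

attribute [local instance] Matrix.normedAddCommGroup Matrix.normedSpace

/-- Gaussian integral formula for the exponential of the square of a
Hermitian matrix: `exp(F²) = (4π)^(−1/2) ∫ℝ e^(−k²/4) · exp(k F) dk`. -/
theorem exp_sq_eq_gaussian_integral {n : ℕ} (F : Matrix (Fin n) (Fin n) ℂ)
    (hF : F.IsHermitian) :
    NormedSpace.exp (F ^ 2) =
      ((4 * Real.pi) ^ (-(1 / 2 : ℝ))) •
        ∫ k : ℝ, Real.exp (-k ^ 2 / 4) • NormedSpace.exp (((k : ℂ)) • F) := by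
  classical
  set U : Matrix (Fin n) (Fin n) ℂ := (hF.eigenvectorUnitary : Matrix (Fin n) (Fin n) ℂ) with hU
  have hU1 : U * star U = 1 := Matrix.mem_unitaryGroup_iff.mp hF.eigenvectorUnitary.2
  have hU2 : star U * U = 1 := Matrix.mem_unitaryGroup_iff'.mp hF.eigenvectorUnitary.2
  set u : (Matrix (Fin n) (Fin n) ℂ)ˣ := ⟨U, star U, hU1, hU2⟩ with hu
  have hconj : ∀ A : Matrix (Fin n) (Fin n) ℂ,
      NormedSpace.exp (U * A * star U) = U * NormedSpace.exp A * star U :=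
    fun A => Matrix.exp_units_conj u A
  set lam : Fin n → ℝ := hF.eigenvalues with hlam
  have hspec : F = U * Matrix.diagonal (fun p => (lam p : ℂ)) * star U := hF.spectral_theorem
  set M : Fin n → Matrix (Fin n) (Fin n) ℂ :=
    fun p => U * Matrix.single p p (1 : ℂ) * star U with hM
  have hdiag : ∀ v : Fin n → ℂ,
      U * Matrix.diagonal v * star U = ∑ p, v p • M p := by
    intro v
    have h1 : Matrix.diagonal v = ∑ p, v p • Matrix.single p p (1 : ℂ) := by
      ext i j
      rw [Matrix.sum_apply]
      rcases eq_or_ne i j with rfl | h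
      · rw [Matrix.diagonal_apply_eq, Finset.sum_eq_single i]
        · simp [Matrix.single]
        · intro b _ hb
          simp [Matrix.single, hb]
        · simp
      · rw [Matrix.diagonal_apply_ne _ h]
        symm
        apply Finset.sum_eq_zero
        intro p _
        have hne : ¬(p = i ∧ p = j) := fun hc => h (hc.1.symm.trans hc.2)
        simp [Matrix.single, hne]
    rw [h1, Finset.mul_sum, Finset.sum_mul]
    refine Finset.sum_congr rfl fun p _ => ?_
    rw [Matrix.mul_smul, Matrix.smul_mul]
  -- pointwise identity for the integrand
  have hpoint : ∀ k : ℝ, Real.exp (-k ^ 2 / 4) • NormedSpace.exp ((k : ℂ) • F)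
      = ∑ p, Complex.exp (-(1/4 : ℂ) * (k : ℂ) ^ 2 + (lam p : ℂ) * (k : ℂ) + 0) • M p := by
    intro k
    have h1 : (k : ℂ) • F =
        U * Matrix.diagonal ((k : ℂ) • fun p => (lam p : ℂ)) * star U := by
      rw [hspec, Matrix.diagonal_smul, mul_smul_comm, smul_mul_assoc]
    rw [h1, hconj, Matrix.exp_diagonal, Pi.exp_def, hdiag, Finset.smul_sum]
    refine Finset.sum_congr rfl fun p _ => ?_
    rw [← algebraMap_smul ℂ (Real.exp (-k ^ 2 / 4)), smul_smul]
    congr 1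
    simp only [Complex.coe_algebraMap, Pi.smul_apply, smul_eq_mul, ← Complex.exp_eq_exp_ℂ,
      Complex.ofReal_exp, ← Complex.exp_add]
    congr 1
    push_cast
    ring
  -- integrability of the summands
  have hre : (0 : ℝ) < ((1/4 : ℂ)).re := by norm_num
  have hInt : ∀ p : Fin n, Integrable
      (fun k : ℝ => Complex.exp (-(1/4 : ℂ) * (k : ℂ) ^ 2 + (lam p : ℂ) * (k : ℂ) + 0)) :=
    fun p => integrable_cexp_quadratic hre ((lam p : ℂ)) 0
  have hre' : ((-(1/4) : ℂ)).re < 0 := by norm_num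
  -- value of the scalar integrals
  have hval : ∀ p : Fin n,
      (∫ k : ℝ, Complex.exp (-(1/4 : ℂ) * (k : ℂ) ^ 2 + (lam p : ℂ) * (k : ℂ) + 0))
        = (((4 * Real.pi : ℝ) : ℂ)) ^ (1/2 : ℂ) * Complex.exp ((lam p : ℂ) ^ 2) := by
    intro p
    rw [integral_cexp_quadratic hre' ((lam p : ℂ)) 0]
    congr 1
    · congr 1
      push_cast
      ring
    · congr 1
      ring
  -- compute the integral
  have hintegral : (∫ k : ℝ, Real.exp (-k ^ 2 / 4) • NormedSpace.exp ((k : ℂ) • F))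
      = ∑ p, ((((4 * Real.pi : ℝ) : ℂ)) ^ (1/2 : ℂ) * Complex.exp ((lam p : ℂ) ^ 2)) • M p := by
    simp only [hpoint]
    rw [integral_finset_sum _ (fun p _ => (hInt p).smul_const (M p))]
    refine Finset.sum_congr rfl fun p _ => ?_
    rw [integral_smul_const, hval p]
  -- scalar identity
  have hscal : (((4 * Real.pi) ^ (-(1 / 2 : ℝ)) : ℝ) : ℂ) *
      (((4 * Real.pi : ℝ) : ℂ)) ^ (1/2 : ℂ) = 1 := by
    rw [show ((1/2 : ℂ)) = (((1/2 : ℝ) : ℂ)) by norm_num,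
      ← Complex.ofReal_cpow (by positivity), ← Complex.ofReal_mul,
      ← Real.rpow_add (by positivity)]
    norm_num
  -- left-hand side
  have hF2 : F ^ 2 = U * Matrix.diagonal (fun p => ((lam p : ℂ)) ^ 2) * star U := by
    rw [hspec, pow_two]
    simp only [mul_assoc]
    rw [← mul_assoc (star U) U, hU2, one_mul, ← mul_assoc
      (Matrix.diagonal fun p => (lam p : ℂ)), Matrix.diagonal_mul_diagonal]
    congr 1
    ext p
    simp [pow_two]
  rw [hF2, hconj, Matrix.exp_diagonal, Pi.exp_def, hdiag, hintegral, Finset.smul_sum]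
  refine Finset.sum_congr rfl fun p _ => ?_
  rw [← algebraMap_smul ℂ ((4 * Real.pi) ^ (-(1 / 2 : ℝ))), smul_smul, ← mul_assoc,
    Complex.coe_algebraMap, hscal, one_mul, ← Complex.exp_eq_exp_ℂ]
end

section
/- Lie product formula with an affine first factor: let A₁, A₂, …, Aₙ be N×N complex matrices. Then the sequence M ↦ [(1 + A₁/M) · exp(A₂/M) · ⋯ · exp(Aₙ/M)]^M (M a positive natural number, 1 denoting the identity matrix, and the M-th power taken in the matrix ring) converges, as M → ∞, to exp(A₁ + A₂ + ⋯ + Aₙ). -/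
open Filter NormedSpace

section Abstract

variable {𝔸 : Type*} [NormedRing 𝔸] [NormOneClass 𝔸] [NormedAlgebra ℂ 𝔸] [CompleteSpace 𝔸]

lemma my_norm_exp_le (x : 𝔸) : ‖exp x‖ ≤ Real.exp ‖x‖ := by
  rw [Real.exp_eq_exp_ℝ, exp_eq_tsum_div (𝔸 := ℝ), exp_eq_tsum (𝕂 := ℂ)]
  refine (norm_tsum_le_tsum_norm (norm_expSeries_summable' (𝕂 := ℂ) x)).trans ?_
  refine Summable.tsum_le_tsum (fun n => ?_) (norm_expSeries_summable' (𝕂 := ℂ) x)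
    (Real.summable_pow_div_factorial ‖x‖)
  rw [norm_smul, norm_inv, Complex.norm_natCast, div_eq_inv_mul]
  exact mul_le_mul_of_nonneg_left (norm_pow_le x n) (by positivity)

lemma my_pow_sub_pow {a b : 𝔸} {c : ℝ}
    (ha : ‖a‖ ≤ c) (hb : ‖b‖ ≤ c) : ∀ m : ℕ,
    ‖a ^ (m + 1) - b ^ (m + 1)‖ ≤ (m + 1) * c ^ m * ‖a - b‖ := by
  have hc : 0 ≤ c := le_trans (norm_nonneg a) ha
  intro m
  induction m with
  | zero => simpa using le_refl _
  | succ m ih =>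
    have key : a ^ (m + 1 + 1) - b ^ (m + 1 + 1)
        = a ^ (m + 1) * (a - b) + (a ^ (m + 1) - b ^ (m + 1)) * b := by
      rw [pow_succ, pow_succ]; noncomm_ring
    rw [key]
    calc ‖a ^ (m + 1) * (a - b) + (a ^ (m + 1) - b ^ (m + 1)) * b‖
        ≤ ‖a ^ (m + 1) * (a - b)‖ + ‖(a ^ (m + 1) - b ^ (m + 1)) * b‖ := norm_add_le _ _
      _ ≤ ‖a ^ (m + 1)‖ * ‖a - b‖ + ‖a ^ (m + 1) - b ^ (m + 1)‖ * ‖b‖ :=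
          add_le_add (norm_mul_le _ _) (norm_mul_le _ _)
      _ ≤ c ^ (m + 1) * ‖a - b‖ + ((m + 1) * c ^ m * ‖a - b‖) * c := by
          have h1 : ‖a ^ (m + 1)‖ ≤ c ^ (m + 1) :=
            le_trans (norm_pow_le' a (Nat.succ_pos m)) (pow_le_pow_left₀ (norm_nonneg a) ha _)
          gcongr
      _ = (((m : ℝ) + 1 + 1) * c ^ (m + 1)) * ‖a - b‖ := by ring
      _ = (↑(m + 1) + 1) * c ^ (m + 1) * ‖a - b‖ := by push_cast; ring

lemma my_deriv_prod (l : List 𝔸) :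
    HasDerivAt (fun t : ℂ => (l.map fun x => exp (t • x)).prod) l.sum 0 := by
  induction l with
  | nil => simpa using hasDerivAt_const (0 : ℂ) (1 : 𝔸)
  | cons x xs ih =>
    have hx : HasDerivAt (fun t : ℂ => exp (t • x)) x 0 := by
      simpa using hasDerivAt_exp_smul_const x (0 : ℂ)
    have h := hx.mul ih
    simp only [List.map_cons, List.prod_cons, List.sum_cons]
    convert h using 1
    rfl
    have h1 : ((xs.map fun x => exp ((0:ℂ) • x)).prod : 𝔸) = 1 := by
      simp [List.prod_eq_one, exp_zero]
    rw [h1]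
    simp [exp_zero]

lemma key_abstract {n : ℕ} (A : 𝔸) (B : Fin n → 𝔸) :
    Tendsto
      (fun M : ℕ =>
        ((1 + ((M : ℂ))⁻¹ • A) *
            (List.ofFn fun i => exp (((M : ℂ))⁻¹ • B i)).prod) ^ M)
      atTop (nhds (exp (A + ∑ i, B i))) := by
  set S : 𝔸 := A + ∑ i, B i with hS
  set F : ℂ → 𝔸 := fun t => (1 + t • A) * (List.ofFn fun i => exp (t • B i)).prod with hF
  set G : ℂ → 𝔸 := fun t => exp (t • S) with hG
  -- derivative facts
  have hprod : HasDerivAt (fun t : ℂ => (List.ofFn fun i => exp (t • B i)).prod)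
      (∑ i, B i) 0 := by
    have := my_deriv_prod (List.ofFn B)
    simp only [List.map_ofFn, List.sum_ofFn] at this
    exact this
  have haff : HasDerivAt (fun t : ℂ => 1 + t • A) A 0 := by
    simpa using ((hasDerivAt_id (0:ℂ)).smul_const A).const_add (1 : 𝔸)
  have hFd : HasDerivAt F S 0 := by
    have h := haff.mul hprod
    have hone : ((List.ofFn fun i => exp ((0:ℂ) • B i)).prod : 𝔸) = 1 := by
      simp [List.prod_eq_one, exp_zero]
    rw [hone] at h
    simp only [mul_one, zero_smul, add_zero, one_mul] at h; exact h
  have hGd : HasDerivAt G S 0 := by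
    simpa [hG] using hasDerivAt_exp_smul_const S (0 : ℂ)
  have hF0 : F 0 = 1 := by simp [hF, List.prod_eq_one, exp_zero]
  have hG0 : G 0 = 1 := by simp [hG, exp_zero]
  -- little-o
  have hlo : (fun t : ℂ => F t - G t) =o[nhds 0] (fun t : ℂ => t) := by
    have h1 := hasDerivAt_iff_isLittleO.mp hFd
    have h2 := hasDerivAt_iff_isLittleO.mp hGd
    have h3 := h1.sub h2
    simp only [sub_zero, hF0, hG0] at h3
    refine h3.congr_left ?_
    intro t; abel
  -- composition along 1/M
  have htend : Tendsto (fun M : ℕ => ((M : ℂ))⁻¹) atTop (nhds 0) := by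
    have h1 : Tendsto (fun M : ℕ => ((M : ℝ))⁻¹) atTop (nhds 0) :=
      tendsto_inv_atTop_zero.comp tendsto_natCast_atTop_atTop
    have h2 := (Complex.continuous_ofReal.tendsto 0).comp h1
    refine Tendsto.congr (fun M => ?_) (by simpa using h2)
    simp [Function.comp]
  have hcomp : (fun M : ℕ => F ((M:ℂ))⁻¹ - G ((M:ℂ))⁻¹) =o[atTop] fun M : ℕ => ((M:ℂ))⁻¹ :=
    hlo.comp_tendsto htend
  set d : ℕ → ℝ := fun M => ‖F ((M:ℂ))⁻¹ - G ((M:ℂ))⁻¹‖ with hd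
  have hsmall : Tendsto (fun M : ℕ => (M : ℝ) * d M) atTop (nhds 0) := by
    rw [NormedAddCommGroup.tendsto_nhds_zero]
    intro ε hε
    filter_upwards [hcomp.def (half_pos hε), eventually_ge_atTop 1] with M hM hM1
    have hMpos : (0:ℝ) < M := by exact_mod_cast hM1
    have hnorm : ‖((M:ℂ))⁻¹‖ = ((M:ℝ))⁻¹ := by
      rw [norm_inv, Complex.norm_natCast]
    rw [hnorm] at hM
    have : (M : ℝ) * d M ≤ ε / 2 := by
      calc (M : ℝ) * d M ≤ (M:ℝ) * (ε / 2 * ((M:ℝ))⁻¹) := by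
            exact mul_le_mul_of_nonneg_left hM (le_of_lt hMpos)
        _ = ε / 2 := by field_simp
    have hnn : 0 ≤ (M : ℝ) * d M := by positivity
    rw [Real.norm_eq_abs, abs_of_nonneg hnn]
    linarith
  -- final squeeze
  set K : ℝ := ‖S‖ with hK
  have hK0 : 0 ≤ K := norm_nonneg S
  rw [← tendsto_sub_nhds_zero_iff]
  have hg : Tendsto (fun M : ℕ => Real.exp (K + 1) * ((M : ℝ) * d M)) atTop (nhds 0) := by
    simpa using hsmall.const_mul (Real.exp (K + 1))
  refine squeeze_zero_norm' ?_ hg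
  · filter_upwards [eventually_ge_atTop 1,
      hsmall.eventually (eventually_le_nhds one_pos)] with M hM1 hMd
    obtain ⟨m, rfl⟩ : ∃ m, M = m + 1 := ⟨M - 1, (Nat.succ_pred_eq_of_pos hM1).symm⟩
    set M := m + 1
    have hMpos : (0:ℝ) < M := by positivity
    -- G M⁻¹ ^ M = exp S
    have hGM : G ((M:ℂ))⁻¹ ^ M = exp S := by
      letI : NormedAlgebra ℚ 𝔸 := NormedAlgebra.restrictScalars ℚ ℂ 𝔸
      rw [hG, ← exp_nsmul, ← Nat.cast_smul_eq_nsmul ℂ, smul_smul,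
        mul_inv_cancel₀ (by exact_mod_cast hMpos.ne'), one_smul]
    -- norm bounds
    have hGnorm : ‖G ((M:ℂ))⁻¹‖ ≤ Real.exp (K / M) := by
      have := my_norm_exp_le (((M:ℂ))⁻¹ • S)
      rwa [norm_smul, norm_inv, Complex.norm_natCast, inv_mul_eq_div, ← hK] at this
    set c : ℝ := Real.exp ((K + 1) / M) with hc
    have hexp1 : Real.exp (K / M) + 1 / M ≤ c := by
      have h1 : (1:ℝ) + 1 / M ≤ Real.exp (1 / M) := by
        have := Real.add_one_le_exp (1 / (M:ℝ))
        linarith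
      have h2 : (1:ℝ) ≤ Real.exp (K / M) := Real.one_le_exp (by positivity)
      calc Real.exp (K / M) + 1 / M
          ≤ Real.exp (K / M) + Real.exp (K / M) * (1 / M) := by
            have h3 : (0:ℝ) ≤ 1 / M := by positivity
            have h4 := mul_le_mul_of_nonneg_right h2 h3
            linarith
        _ = Real.exp (K / M) * (1 + 1 / M) := by ring
        _ ≤ Real.exp (K / M) * Real.exp (1 / M) := by nlinarith [Real.exp_pos (K / (M:ℝ))]
        _ = c := by rw [← Real.exp_add, hc]; ring_nf
    have hGc : ‖G ((M:ℂ))⁻¹‖ ≤ c := le_trans hGnorm (by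
      have : (0:ℝ) ≤ 1 / M := by positivity
      linarith)
    have hdM : d M ≤ 1 / M := by
      rw [le_div_iff₀ hMpos, mul_comm]
      exact hMd
    have hFc : ‖F ((M:ℂ))⁻¹‖ ≤ c := by
      have : ‖F ((M:ℂ))⁻¹‖ ≤ ‖G ((M:ℂ))⁻¹‖ + d M := by
        have := norm_sub_norm_le (F ((M:ℂ))⁻¹) (G ((M:ℂ))⁻¹)
        rw [hd]; dsimp only; linarith [this]
      calc ‖F ((M:ℂ))⁻¹‖ ≤ Real.exp (K / M) + 1 / M := by linarith [hdM, hGnorm]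
        _ ≤ c := hexp1
    -- power bound
    have hpow := my_pow_sub_pow hFc hGc m
    have hcpow : c ^ m ≤ Real.exp (K + 1) := by
      rw [hc, ← Real.exp_nat_mul]
      apply Real.exp_le_exp.2
      rw [div_eq_inv_mul]
      calc (m:ℝ) * ((M:ℝ)⁻¹ * (K + 1)) = ((m:ℝ) / M) * (K + 1) := by ring
        _ ≤ 1 * (K + 1) := by
            apply mul_le_mul_of_nonneg_right _ (by linarith)
            rw [div_le_one hMpos]
            exact_mod_cast Nat.le_succ m
        _ = K + 1 := one_mul _
    calc ‖F ((M:ℂ))⁻¹ ^ M - exp S‖ = ‖F ((M:ℂ))⁻¹ ^ (m+1) - G ((M:ℂ))⁻¹ ^ (m+1)‖ := by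
          rw [hGM]
      _ ≤ ((m:ℝ) + 1) * c ^ m * d M := hpow
      _ ≤ ((m:ℝ) + 1) * Real.exp (K + 1) * d M := by
          have hd0 : 0 ≤ d M := norm_nonneg _
          gcongr
      _ = Real.exp (K + 1) * ((M:ℝ) * d M) := by simp only [M]; push_cast; ring

end Abstract


/-- Lie product formula with an affine first factor: for `N×N` complex matrices
`A₁` (written `A`) and `A₂, …, Aₙ` (written `B 0, …, B (n-1)`), the sequence
`M ↦ [(1 + A₁/M) · exp(A₂/M) ⋯ exp(Aₙ/M)]^M` converges to `exp(A₁ + A₂ + ⋯ + Aₙ)`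
as `M → ∞`. -/
theorem lie_product_formula_affine_first_factor {N n : ℕ}
    (A : Matrix (Fin N) (Fin N) ℂ) (B : Fin n → Matrix (Fin N) (Fin N) ℂ) :
    Tendsto
      (fun M : ℕ =>
        ((1 + ((M : ℂ))⁻¹ • A) *
            (List.ofFn fun i => NormedSpace.exp (((M : ℂ))⁻¹ • B i)).prod) ^ M)
      atTop (nhds (NormedSpace.exp (A + ∑ i, B i))) := by
  rcases Nat.eq_zero_or_pos N with hN | hN
  · subst hN
    haveI : Subsingleton (Matrix (Fin 0) (Fin 0) ℂ) :=
      ⟨fun x y => by ext i j; exact absurd i.2 (Nat.not_lt_zero _)⟩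
    exact Tendsto.congr (fun M => Subsingleton.elim _ _) tendsto_const_nhds
  · haveI : Nonempty (Fin N) := ⟨⟨0, hN⟩⟩
    letI : SeminormedRing (Matrix (Fin N) (Fin N) ℂ) := Matrix.linftyOpSemiNormedRing
    letI : NormedRing (Matrix (Fin N) (Fin N) ℂ) := Matrix.linftyOpNormedRing
    letI : NormedAlgebra ℂ (Matrix (Fin N) (Fin N) ℂ) := Matrix.linftyOpNormedAlgebra
    haveI : NormOneClass (Matrix (Fin N) (Fin N) ℂ) := Matrix.linfty_opNormOneClass
    exact key_abstract A B
end

section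
/- Quarter rotation: let A be a complex unital Banach algebra and let a, b, c ∈ A satisfy c·a − a·c = 2i·b and b·c − c·b = 2i·a. Then exp(−(i π/4)·c) · a · exp((i π/4)·c) = b and exp(−(i π/4)·c) · b · exp((i π/4)·c) = −a. -/
open NormedSpace

lemma exp_mul_eigen {A : Type*} [NormedRing A] [NormedAlgebra ℂ A]
    [CompleteSpace A] (c x : A) (μ : ℂ)
    (h : c * x - x * c = μ • x) (s : ℂ) :
    exp (s • c) * x = Complex.exp (s * μ) • (x * exp (s • c)) := by
  letI : NormedAlgebra ℚ A := .restrictScalars ℚ ℂ A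
  have hcx : c * x = x * (c + μ • 1) := by
    rw [mul_add, mul_smul_comm, mul_one]
    linear_combination (norm := module) h
  have hpow : ∀ n : ℕ, c ^ n * x = x * (c + μ • 1) ^ n := by
    intro n
    induction n with
    | zero => simp
    | succ n ih => rw [pow_succ, pow_succ, mul_assoc, hcx, ← mul_assoc, ih, mul_assoc]
  have key : exp (s • c) * x = x * exp (s • (c + μ • 1)) := by
    simp only [exp_eq_tsum (𝕂 := ℂ)]
    rw [← (expSeries_summable' (𝕂 := ℂ) (s • c)).tsum_mul_right x,
      ← (expSeries_summable' (𝕂 := ℂ) (s • (c + μ • 1))).tsum_mul_left x]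
    congr 1
    ext n
    rw [smul_pow, smul_pow, smul_mul_assoc, smul_mul_assoc, hpow, mul_smul_comm, mul_smul_comm]
  have h1A : exp (s • (μ • (1:A))) = Complex.exp (s * μ) • 1 := by
    rw [smul_smul,
      show (s * μ) • (1:A) = algebraMap ℂ A (s * μ) from
        (Algebra.algebraMap_eq_smul_one _).symm,
      ← algebraMap_exp_comm, Algebra.algebraMap_eq_smul_one,
      ← Complex.exp_eq_exp_ℂ]
  rw [key, smul_add,
    exp_add_of_commute (((Commute.one_right (s • c)).smul_right μ).smul_right s),
    h1A, mul_smul_comm, mul_one, mul_smul_comm]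

lemma quarter_conj {A : Type*} [NormedRing A] [NormedAlgebra ℂ A]
    [CompleteSpace A] (c x : A) (μ : ℂ)
    (h : c * x - x * c = μ • x) :
    exp ((-(Complex.I * (Real.pi : ℂ) / 4)) • c) * x *
      exp ((Complex.I * (Real.pi : ℂ) / 4) • c) =
    Complex.exp ((-(Complex.I * (Real.pi : ℂ) / 4)) * μ) • x := by
  letI : NormedAlgebra ℚ A := .restrictScalars ℚ ℂ A
  set s : ℂ := -(Complex.I * (Real.pi : ℂ) / 4) with hs
  have hinv : exp (s • c) * exp ((Complex.I * (Real.pi : ℂ) / 4) • c) = 1 := by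
    rw [← exp_add_of_commute (((Commute.refl c).smul_left s).smul_right _)]
    rw [hs, neg_smul, neg_add_cancel, exp_zero]
  rw [exp_mul_eigen c x μ h s, smul_mul_assoc, mul_assoc, hinv, mul_one]

/-- Quarter rotation in a complex unital Banach algebra: if
`c·a − a·c = 2i·b` and `b·c − c·b = 2i·a`, then
`exp(−(iπ/4)·c) · a · exp((iπ/4)·c) = b` and
`exp(−(iπ/4)·c) · b · exp((iπ/4)·c) = −a`. -/
theorem quarter_rotation {A : Type*} [NormedRing A] [NormedAlgebra ℂ A]
    [CompleteSpace A] (a b c : A)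
    (h1 : c * a - a * c = (2 * Complex.I) • b)
    (h2 : b * c - c * b = (2 * Complex.I) • a) :
    NormedSpace.exp ((-(Complex.I * (Real.pi : ℂ) / 4)) • c) * a *
        NormedSpace.exp ((Complex.I * (Real.pi : ℂ) / 4) • c) = b ∧
    NormedSpace.exp ((-(Complex.I * (Real.pi : ℂ) / 4)) • c) * b *
        NormedSpace.exp ((Complex.I * (Real.pi : ℂ) / 4) • c) = -a := by
  set E := NormedSpace.exp ((-(Complex.I * (Real.pi : ℂ) / 4)) • c)
  set F := NormedSpace.exp ((Complex.I * (Real.pi : ℂ) / 4) • c)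
  set x := a + Complex.I • b with hxdef
  set y := a - Complex.I • b with hydef
  have hx0 : c * x - x * c = (2:ℂ) • x := by
    rw [hxdef]
    have hcb : c * b - b * c = (-(2 * Complex.I)) • a := by
      rw [← neg_sub, h2, neg_smul]
    have e : c * (a + Complex.I • b) - (a + Complex.I • b) * c
        = (c * a - a * c) + Complex.I • (c * b - b * c) := by
      rw [mul_add, add_mul, mul_smul_comm, smul_mul_assoc]; module
    rw [e, h1, hcb]
    match_scalars <;> (simp [Complex.ext_iff]; try norm_num)
  have hy0 : c * y - y * c = (-2:ℂ) • y := by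
    rw [hydef]
    have hcb : c * b - b * c = (-(2 * Complex.I)) • a := by
      rw [← neg_sub, h2, neg_smul]
    have e : c * (a - Complex.I • b) - (a - Complex.I • b) * c
        = (c * a - a * c) - Complex.I • (c * b - b * c) := by
      rw [mul_sub, sub_mul, mul_smul_comm, smul_mul_assoc]; module
    rw [e, h1, hcb]
    match_scalars <;> (simp [Complex.ext_iff]; try norm_num)
  have hc1 : Complex.exp ((-(Complex.I * (Real.pi : ℂ) / 4)) * 2) = -Complex.I := by
    rw [show (-(Complex.I * (Real.pi : ℂ) / 4)) * 2 = (↑(-(Real.pi/2)) : ℂ) * Complex.I by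
      push_cast; ring, Complex.exp_mul_I]
    push_cast
    simp [Real.cos_pi_div_two, Real.sin_pi_div_two]
  have hc2 : Complex.exp ((-(Complex.I * (Real.pi : ℂ) / 4)) * (-2)) = Complex.I := by
    rw [show (-(Complex.I * (Real.pi : ℂ) / 4)) * (-2) = (↑(Real.pi/2) : ℂ) * Complex.I by
      push_cast; ring, Complex.exp_mul_I]
    push_cast
    simp [Real.cos_pi_div_two, Real.sin_pi_div_two]
  have e1 : E * x * F = (-Complex.I) • x := by
    rw [show E * x * F = Complex.exp ((-(Complex.I * (Real.pi : ℂ) / 4)) * 2) • x from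
      quarter_conj c x 2 hx0, hc1]
  have e2 : E * y * F = Complex.I • y := by
    rw [show E * y * F = Complex.exp ((-(Complex.I * (Real.pi : ℂ) / 4)) * (-2)) • y from
      quarter_conj c y (-2) hy0, hc2]
  have hxy : x + y = (2:ℂ) • a := by rw [hxdef, hydef]; module
  have hxy' : x - y = (2 * Complex.I) • b := by rw [hxdef, hydef]; module
  constructor
  · have h2a : (2:ℂ) • (E * a * F) = (2:ℂ) • b := by
      calc (2:ℂ) • (E * a * F) = E * ((2:ℂ) • a) * F := by
            rw [mul_smul_comm, smul_mul_assoc]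
        _ = E * x * F + E * y * F := by rw [← hxy, mul_add, add_mul]
        _ = (-Complex.I) • x + Complex.I • y := by rw [e1, e2]
        _ = (2:ℂ) • b := by
            rw [hxdef, hydef]
            match_scalars <;> (simp [Complex.ext_iff]; try norm_num)
    exact smul_right_injective A two_ne_zero h2a
  · have h2b : (2 * Complex.I) • (E * b * F) = (2 * Complex.I) • (-a) := by
      calc (2 * Complex.I) • (E * b * F) = E * ((2 * Complex.I) • b) * F := by
            rw [mul_smul_comm, smul_mul_assoc]
        _ = E * x * F - E * y * F := by rw [← hxy', mul_sub, sub_mul]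
        _ = (-Complex.I) • x - Complex.I • y := by rw [e1, e2]
        _ = (2 * Complex.I) • (-a) := by
            rw [hxdef, hydef]
            match_scalars <;> (simp [Complex.ext_iff]; try norm_num)
    exact smul_right_injective A (by simp [Complex.I_ne_zero]) h2b
end

section
/- Pointwise convexity bound for the infrared integrand: let d ≥ 3 be an integer and p ∈ ℝ^d. Define Y(p) = −(1/d)·Σ_{m=1}^{d} cos p^{(m)} and, for each 3-element subset {i,j,k} of {1,…,d}, Y_{ijk}(p) = −(1/3)·(cos p^{(i)} + cos p^{(j)} + cos p^{(k)}). Let F(s) = s²/(1−s). Assume that max(Y_{ijk}(p), 0) < 1 for every 3-element subset {i,j,k}. Then F( max(Y(p),0) ) ≤ (1/C(d,3)) · Σ_{{i,j,k}} F( max(Y_{ijk}(p),0) ), where the sum runs over all 3-element subsets of {1,…,d} and C(d,3) = d(d−1)(d−2)/6 is their number. -/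
noncomputable def irF (s : ℝ) : ℝ := s ^ 2 / (1 - s)

lemma irF_convex : ConvexOn ℝ (Set.Ico (0:ℝ) 1) irF := by
  refine ⟨convex_Ico 0 1, ?_⟩
  rintro x ⟨hx0, hx1⟩ y ⟨hy0, hy1⟩ a b ha hb hab
  simp only [smul_eq_mul, irF]
  have hx : 0 < 1 - x := by linarith
  have hy : 0 < 1 - y := by linarith
  have hz : 0 < 1 - (a*x + b*y) := by
    nlinarith [mul_nonneg (mul_nonneg ha hx.le) hy0, mul_nonneg (mul_nonneg hb hy.le) hx0,
      mul_pos hx hy]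
  have key : (a * x + b * y) ^ 2 / (1 - (a * x + b * y)) ≤
      (a * (x ^ 2 * (1 - y)) + b * (y ^ 2 * (1 - x))) / ((1 - x) * (1 - y)) := by
    rw [div_le_div_iff₀ hz (by positivity)]
    have hb2 : b = 1 - a := by linarith
    subst hb2
    nlinarith [mul_nonneg (mul_nonneg ha hb) (sq_nonneg (x - y))]
  calc (a * x + b * y) ^ 2 / (1 - (a * x + b * y)) ≤ _ := key
    _ = a * (x ^ 2 / (1 - x)) + b * (y ^ 2 / (1 - y)) := by field_simp

lemma irF_mono : MonotoneOn irF (Set.Ico (0:ℝ) 1) := by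
  rintro x ⟨hx0, hx1⟩ y ⟨hy0, hy1⟩ hxy
  have hx : 0 < 1 - x := by linarith
  have hy : 0 < 1 - y := by linarith
  rw [irF, irF, div_le_div_iff₀ hx hy]
  nlinarith [mul_nonneg (sub_nonneg.2 hxy) (add_nonneg hx0 hy0),
    mul_nonneg (mul_nonneg (sub_nonneg.2 hxy) hx0) hy0]

lemma max_image : (fun y : ℝ => max y 0) '' Set.Iio 1 = Set.Ico (0:ℝ) 1 := by
  ext x
  constructor
  · rintro ⟨y, hy, rfl⟩
    exact ⟨le_max_right _ _, max_lt hy one_pos⟩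
  · rintro ⟨hx0, hx1⟩
    exact ⟨x, hx1, max_eq_left hx0⟩

lemma g_convex : ConvexOn ℝ (Set.Iio (1:ℝ)) (irF ∘ fun y => max y 0) := by
  refine ConvexOn.comp ?_ ?_ ?_
  · rw [max_image]; exact irF_convex
  · exact (convexOn_id (convex_Iio 1)).sup (convexOn_const 0 (convex_Iio 1))
  · rw [max_image]; exact irF_mono

lemma count_mem {d : ℕ} (i : Fin d) :
    ((Finset.powersetCard 3 (Finset.univ : Finset (Fin d))).filter (fun s => i ∈ s)).card
      = (d - 1).choose 2 := by
  have : ((Finset.powersetCard 3 (Finset.univ : Finset (Fin d))).filter (fun s => i ∈ s)).card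
      = (Finset.powersetCard 2 ((Finset.univ : Finset (Fin d)).erase i)).card := by
    apply Finset.card_bij (fun s _ => s.erase i)
    · intro s hs
      simp only [Finset.mem_filter, Finset.mem_powersetCard] at hs
      rw [Finset.mem_powersetCard]
      exact ⟨Finset.erase_subset_erase i hs.1.1, by rw [Finset.card_erase_of_mem hs.2, hs.1.2]⟩
    · intro s hs t ht hst
      simp only [Finset.mem_filter] at hs ht
      rw [← Finset.insert_erase hs.2, hst, Finset.insert_erase ht.2]
    · intro t ht
      rw [Finset.mem_powersetCard] at ht
      have hit : i ∉ t := fun hi => (Finset.mem_erase.1 (ht.1 hi)).1 rfl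
      refine ⟨insert i t, ?_, by rw [Finset.erase_insert hit]⟩
      simp only [Finset.mem_filter, Finset.mem_powersetCard]
      exact ⟨⟨Finset.subset_univ _, by rw [Finset.card_insert_of_notMem hit, ht.2]⟩,
        Finset.mem_insert_self _ _⟩
  rw [this, Finset.card_powersetCard, Finset.card_erase_of_mem (Finset.mem_univ i),
    Finset.card_univ, Fintype.card_fin]

lemma sum_over_triples {d : ℕ} (f : Fin d → ℝ) :
    ∑ s ∈ Finset.powersetCard 3 (Finset.univ : Finset (Fin d)), ∑ i ∈ s, f i
      = ((d - 1).choose 2 : ℝ) * ∑ i, f i := by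
  calc ∑ s ∈ Finset.powersetCard 3 (Finset.univ : Finset (Fin d)), ∑ i ∈ s, f i
      = ∑ s ∈ Finset.powersetCard 3 (Finset.univ : Finset (Fin d)),
          ∑ i, if i ∈ s then f i else 0 := by
        refine Finset.sum_congr rfl fun s _ => ?_
        rw [Finset.sum_ite_mem, Finset.univ_inter]
    _ = ∑ i, ∑ s ∈ Finset.powersetCard 3 (Finset.univ : Finset (Fin d)),
          if i ∈ s then f i else 0 := Finset.sum_comm
    _ = ∑ i, ((d - 1).choose 2 : ℝ) * f i := by
        refine Finset.sum_congr rfl fun i _ => ?_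
        rw [← Finset.sum_filter, Finset.sum_const, count_mem, nsmul_eq_mul]
    _ = ((d - 1).choose 2 : ℝ) * ∑ i, f i := by rw [Finset.mul_sum]

/-- Pointwise convexity bound for the infrared integrand: with
`Y(p) = −(1/d)·Σ_{m} cos p^{(m)}` and, for each 3-element subset `s` of the
coordinates, `Y_s(p) = −(1/3)·Σ_{i∈s} cos p^{(i)}`, if `max(Y_s(p),0) < 1` for
every such `s`, then
`F(max(Y(p),0)) ≤ (1/C(d,3)) · Σ_s F(max(Y_s(p),0))`. -/
theorem infrared_pointwise_convexity_bound {d : ℕ} (hd : 3 ≤ d) (p : Fin d → ℝ)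
    (h : ∀ s ∈ Finset.powersetCard 3 (Finset.univ : Finset (Fin d)),
      max (-(1 / 3 : ℝ) * ∑ i ∈ s, Real.cos (p i)) 0 < 1) :
    irF (max (-(1 / (d : ℝ)) * ∑ m, Real.cos (p m)) 0) ≤
      (1 / (d.choose 3 : ℝ)) *
        ∑ s ∈ Finset.powersetCard 3 (Finset.univ : Finset (Fin d)),
          irF (max (-(1 / 3 : ℝ) * ∑ i ∈ s, Real.cos (p i)) 0) := by
  set T := Finset.powersetCard 3 (Finset.univ : Finset (Fin d)) with hT
  have hC : (0:ℝ) < (d.choose 3 : ℝ) := by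
    exact_mod_cast Nat.choose_pos hd
  have hcardT : T.card = d.choose 3 := by
    rw [hT, Finset.card_powersetCard, Finset.card_univ, Fintype.card_fin]
  -- Jensen
  have hw : ∑ _s ∈ T, (1 / (d.choose 3 : ℝ)) = 1 := by
    rw [Finset.sum_const, hcardT, nsmul_eq_mul]
    field_simp
  have hmem : ∀ s ∈ T, (-(1 / 3 : ℝ) * ∑ i ∈ s, Real.cos (p i)) ∈ Set.Iio (1:ℝ) :=
    fun s hs => lt_of_le_of_lt (le_max_left _ _) (h s hs)
  have jensen := g_convex.map_sum_le (t := T)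
    (w := fun _ => (1 / (d.choose 3 : ℝ)))
    (p := fun s => -(1 / 3 : ℝ) * ∑ i ∈ s, Real.cos (p i))
    (fun _ _ => by positivity) hw hmem
  -- evaluate the averaged point
  have hpoint : ∑ s ∈ T, (1 / (d.choose 3 : ℝ)) • (-(1 / 3 : ℝ) * ∑ i ∈ s, Real.cos (p i))
      = -(1 / (d : ℝ)) * ∑ m, Real.cos (p m) := by
    simp only [smul_eq_mul]
    rw [← Finset.mul_sum]
    have hsum : ∑ s ∈ T, -(1 / 3 : ℝ) * ∑ i ∈ s, Real.cos (p i)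
        = -(1/3 : ℝ) * (((d - 1).choose 2 : ℝ) * ∑ m, Real.cos (p m)) := by
      rw [← Finset.mul_sum, hT, sum_over_triples]
    rw [hsum]
    have hnat : (d : ℝ) * ((d - 1).choose 2 : ℝ) = (d.choose 3 : ℝ) * 3 := by
      have : d * ((d - 1).choose 2) = d.choose 3 * 3 := by
        have h1 : d - 1 + 1 = d := by omega
        calc d * ((d - 1).choose 2) = (d - 1 + 1) * ((d - 1).choose 2) := by rw [h1]
          _ = (d - 1 + 1).choose 3 * 3 := Nat.add_one_mul_choose_eq (d - 1) 2
          _ = d.choose 3 * 3 := by rw [h1]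
      exact_mod_cast this
    have hd0 : (d : ℝ) ≠ 0 := by positivity
    field_simp
    linear_combination (-∑ m, Real.cos (p m)) * hnat
  rw [hpoint] at jensen
  simpa only [Function.comp, smul_eq_mul, ← Finset.mul_sum] using jensen
end

section
/- Spectral splitting inequality: let H be an n×n positive semidefinite Hermitian complex matrix, let φ ∈ ℂⁿ, let ε ∈ (0,2], and let E' > 0. Then ⟨φ, H^{1+ε} φ⟩ ≤ (E')^{ε} · ⟨φ, H φ⟩ + (E')^{ε−2} · ⟨φ, H³ φ⟩, where H^{1+ε} is the (1+ε)-th power of H defined by the functional calculus (equivalently, by diagonalization), and ⟨·,·⟩ is the standard inner product on ℂⁿ. -/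
open Matrix
open scoped ComplexOrder

/-- Spectral splitting inequality: for a positive semidefinite Hermitian matrix
`H`, a vector `φ`, `ε ∈ (0,2]` and `E' > 0`,
`⟨φ, H^{1+ε} φ⟩ ≤ (E')^ε ⟨φ, H φ⟩ + (E')^{ε−2} ⟨φ, H³ φ⟩`, where `H^{1+ε}` is
defined by the functional calculus for the Hermitian matrix `H`. -/
theorem spectral_splitting_inequality {n : ℕ} {H : Matrix (Fin n) (Fin n) ℂ}
    (hH : H.PosSemidef) (φ : Fin n → ℂ) {ε : ℝ} (hε0 : 0 < ε) (hε2 : ε ≤ 2)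
    {E' : ℝ} (hE' : 0 < E') :
    (star φ ⬝ᵥ ((hH.1.cfc fun x : ℝ => x ^ (1 + ε)).mulVec φ)).re ≤
      E' ^ ε * (star φ ⬝ᵥ H.mulVec φ).re +
        E' ^ (ε - 2) * (star φ ⬝ᵥ (H ^ 3).mulVec φ).re := by
  classical
  set hA : H.IsHermitian := hH.1 with hAdef
  set U : Matrix (Fin n) (Fin n) ℂ := (hA.eigenvectorUnitary : Matrix (Fin n) (Fin n) ℂ) with hU
  set ψ : Fin n → ℂ := (star U) *ᵥ φ with hψ
  have key : ∀ f : ℝ → ℝ, (star φ ⬝ᵥ ((hA.cfc f) *ᵥ φ)).re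
      = ∑ i, f (hA.eigenvalues i) * Complex.normSq (ψ i) := by
    intro f
    have h1 : star φ ⬝ᵥ ((hA.cfc f) *ᵥ φ)
        = star ψ ⬝ᵥ (diagonal (Complex.ofReal ∘ f ∘ hA.eigenvalues) *ᵥ ψ) := by
      rw [Matrix.IsHermitian.cfc, Unitary.conjStarAlgAut_apply, ← hU, ← mulVec_mulVec, ← mulVec_mulVec, dotProduct_mulVec]
      congr 1
      rw [hψ, star_mulVec]
      simp [Matrix.star_eq_conjTranspose]
    rw [h1]
    simp only [dotProduct, mulVec_diagonal, Complex.re_sum]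
    refine Finset.sum_congr rfl fun i _ => ?_
    simp [Pi.star_apply, RCLike.star_def, Complex.mul_re, Complex.normSq_apply]
    ring
  have hsu : star U * U = 1 := Unitary.coe_star_mul_self hA.eigenvectorUnitary
  have hmul : ∀ f g : ℝ → ℝ, hA.cfc f * hA.cfc g = hA.cfc fun x => f x * g x := by
    intro f g
    simp only [Matrix.IsHermitian.cfc, Unitary.conjStarAlgAut_apply, ← hU]
    simp only [mul_assoc]
    rw [← mul_assoc (star U) U, hsu, one_mul,
      ← mul_assoc (diagonal _) (diagonal _), diagonal_mul_diagonal]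
    exact congrArg (fun d => U * (diagonal d * star U)) (funext fun i => by simp [Function.comp])
  have hid : H = hA.cfc fun x : ℝ => x := by
    rw [Matrix.IsHermitian.cfc]
    exact hA.spectral_theorem
  have e1 : (star φ ⬝ᵥ H *ᵥ φ).re = ∑ i, hA.eigenvalues i * Complex.normSq (ψ i) := by
    conv_lhs => rw [hid]
    exact key _
  have e3 : (star φ ⬝ᵥ (H ^ 3) *ᵥ φ).re
      = ∑ i, (hA.eigenvalues i * hA.eigenvalues i * hA.eigenvalues i) * Complex.normSq (ψ i) := by
    have h3 : H ^ 3 = hA.cfc fun x : ℝ => x * x * x := by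
      rw [pow_succ, pow_succ, pow_one]
      conv_lhs => rw [hid]
      rw [hmul, hmul]
    conv_lhs => rw [h3]
    exact key _
  rw [key, e1, e3, Finset.mul_sum, Finset.mul_sum, ← Finset.sum_add_distrib]
  refine Finset.sum_le_sum fun i _ => ?_
  set x := hA.eigenvalues i with hx
  have hx0 : 0 ≤ x := hH.eigenvalues_nonneg i
  have hc : 0 ≤ Complex.normSq (ψ i) := Complex.normSq_nonneg _
  have hpt : x ^ (1 + ε) ≤ E' ^ ε * x + E' ^ (ε - 2) * (x * x * x) := by
    rcases le_total x E' with h | h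
    · have h1 : x ^ (1 + ε) = x * x ^ ε := by
        rw [Real.rpow_add' hx0 (by positivity), Real.rpow_one]
      have h2 : x ^ ε ≤ E' ^ ε := Real.rpow_le_rpow hx0 h hε0.le
      have h3 : 0 ≤ E' ^ (ε - 2) * (x * x * x) := by positivity
      nlinarith [mul_le_mul_of_nonneg_left h2 hx0]
    · have hxpos : 0 < x := lt_of_lt_of_le hE' h
      have h1 : x ^ (1 + ε) = (x * x * x) * x ^ (ε - 2) := by
        rw [show (1 + ε : ℝ) = 3 + (ε - 2) by ring,
          Real.rpow_add' hx0 (by intro hcon; linarith),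
          show (3 : ℝ) = ((3 : ℕ) : ℝ) by norm_num, Real.rpow_natCast]
        ring
      have h2 : x ^ (ε - 2) ≤ E' ^ (ε - 2) :=
        Real.rpow_le_rpow_of_nonpos hE' h (by linarith)
      have h3 : 0 ≤ E' ^ ε * x := by positivity
      nlinarith [mul_le_mul_of_nonneg_left h2 (by positivity : (0:ℝ) ≤ x * x * x)]
  calc x ^ (1 + ε) * Complex.normSq (ψ i)
      ≤ (E' ^ ε * x + E' ^ (ε - 2) * (x * x * x)) * Complex.normSq (ψ i) :=
        mul_le_mul_of_nonneg_right hpt hc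
    _ = E' ^ ε * (x * Complex.normSq (ψ i))
        + E' ^ (ε - 2) * (x * x * x * Complex.normSq (ψ i)) := by ring
end
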